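/- The ground α-equivalence relation ≈ on nominal terms is transitive: if t ≈ u and u ≈ v then t ≈ v. -/

import Mathlib

/-- Ground nominal terms: t ::= a | f(t₁,...,tₙ) | ⟨a⟩t.
Names and function symbols are both modeled as natural numbers. -/
inductive NTerm : Type
  | name : ℕ → NTerm
  | fn   : ℕ → List NTerm → NTerm
  | abs  : ℕ → NTerm → NTerm

/-- Action of the swapping (a b) on a name. -/
def swapName (a b c : ℕ) : ℕ := if c = a then b else if c = b then a else c

/-- Swapping (a b)·t on ground nominal terms. -/
def NTerm.swap (a b : ℕ) : NTerm → NTerm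
  | .name c  => .name (swapName a b c)
  | .fn f ts => .fn f (ts.attach.map (fun x => NTerm.swap a b x.1))
  | .abs c t => .abs (swapName a b c) (NTerm.swap a b t)
decreasing_by
  all_goals simp_wf
  have := List.sizeOf_lt_of_mem x.2
  omega

/-- The freshness relation a # t on ground nominal terms. -/
inductive Fresh : ℕ → NTerm → Prop
  | name {a b : ℕ} : a ≠ b → Fresh a (.name b)
  | fn {a f} {ts : List NTerm} : (∀ t ∈ ts, Fresh a t) → Fresh a (.fn f ts)
  | absSame {a t} : Fresh a (.abs a t)
  | absDiff {a b t} : a ≠ b → Fresh a t → Fresh a (.abs b t)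

/-- Ground α-equivalence t ≈ u on nominal terms. -/
inductive Aeq : NTerm → NTerm → Prop
  | name (a : ℕ) : Aeq (.name a) (.name a)
  | fn {f} {ts us : List NTerm} : List.Forall₂ Aeq ts us → Aeq (.fn f ts) (.fn f us)
  | absSame {a t u} : Aeq t u → Aeq (.abs a t) (.abs a u)
  | absDiff {a b t u} : a ≠ b → Fresh a u → Aeq t (u.swap a b) →
      Aeq (.abs a t) (.abs b u)

/- auxiliary lemmas -/
lemma swapName_invol (a b c : ℕ) : swapName a b (swapName a b c) = c := by
  simp only [swapName]; split_ifs <;> omega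

lemma swapName_comm (a b c : ℕ) : swapName a b c = swapName b a c := by
  simp only [swapName]; split_ifs <;> omega

lemma swapName_conj (a b c d x : ℕ) :
    swapName c d (swapName a b x) =
      swapName (swapName c d a) (swapName c d b) (swapName c d x) := by
  simp only [swapName]; split_ifs <;> omega

lemma swapName_ne {x y : ℕ} (a b : ℕ) (h : x ≠ y) : swapName a b x ≠ swapName a b y := by
  simp only [swapName]; split_ifs <;> omega

lemma swapName_self (a c : ℕ) : swapName a a c = c := by
  simp only [swapName]; split_ifs <;> omega

lemma swapName_fix {a b c : ℕ} (h1 : c ≠ a) (h2 : c ≠ b) : swapName a b c = c := by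
  simp only [swapName]; split_ifs <;> omega

@[simp] lemma swap_name (a b c : ℕ) : (NTerm.name c).swap a b = .name (swapName a b c) := by
  rw [NTerm.swap]

@[simp] lemma swap_fn (a b f : ℕ) (ts : List NTerm) :
    (NTerm.fn f ts).swap a b = .fn f (ts.map (NTerm.swap a b)) := by
  rw [NTerm.swap]; simp [List.map_subtype, List.unattach_attach]

@[simp] lemma swap_abs (a b c : ℕ) (t : NTerm) :
    (NTerm.abs c t).swap a b = .abs (swapName a b c) (t.swap a b) := by
  rw [NTerm.swap]

theorem swap_swap_eq (a b c d : ℕ) (t : NTerm) :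
    (t.swap a b).swap c d =
      (t.swap c d).swap (swapName c d a) (swapName c d b) := by
  match t with
  | .name e => rw [swap_name, swap_name, swap_name, swap_name, swapName_conj]
  | .abs e s =>
    rw [swap_abs, swap_abs, swap_abs, swap_abs, swap_swap_eq a b c d s, swapName_conj]
  | .fn f ts =>
    simp only [swap_fn, List.map_map, NTerm.fn.injEq, true_and]
    refine List.map_congr_left ?_
    intro s hs
    exact swap_swap_eq a b c d s
decreasing_by
  all_goals simp_wf
  have := List.sizeOf_lt_of_mem hs
  omega

theorem swap_comm (a b : ℕ) (t : NTerm) : t.swap a b = t.swap b a := by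
  match t with
  | .name e => simp [swapName_comm]
  | .abs e s => simp only [swap_abs, swap_comm a b s, swapName_comm]
  | .fn f ts =>
    simp only [swap_fn, NTerm.fn.injEq, true_and]
    refine List.map_congr_left ?_
    intro s hs
    exact swap_comm a b s
decreasing_by
  all_goals simp_wf
  have := List.sizeOf_lt_of_mem hs
  omega

theorem swap_invol (a b : ℕ) (t : NTerm) : (t.swap a b).swap a b = t := by
  match t with
  | .name e => simp [swapName_invol]
  | .abs e s => simp [swap_invol a b s, swapName_invol]
  | .fn f ts =>
    simp only [swap_fn, List.map_map, NTerm.fn.injEq, true_and]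
    have h : ∀ s ∈ ts, (NTerm.swap a b ∘ NTerm.swap a b) s = id s := by
      intro s hs; exact swap_invol a b s
    rw [List.map_congr_left h, List.map_id]
decreasing_by
  all_goals simp_wf
  have := List.sizeOf_lt_of_mem hs
  omega

theorem swap_self (a : ℕ) (t : NTerm) : t.swap a a = t := by
  match t with
  | .name e => rw [swap_name, swapName_self]
  | .abs e s => rw [swap_abs, swap_self a s, swapName_self]
  | .fn f ts =>
    simp only [swap_fn, NTerm.fn.injEq, true_and]
    have h : ∀ s ∈ ts, NTerm.swap a a s = id s := by
      intro s hs; exact swap_self a s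
    rw [List.map_congr_left h, List.map_id]
decreasing_by
  all_goals simp_wf
  have := List.sizeOf_lt_of_mem hs
  omega

/-- size of a term, ignoring names -/
def nsize : NTerm → ℕ
  | .name _ => 1
  | .fn _ ts => 1 + (ts.attach.map (fun x => nsize x.1)).sum
  | .abs _ t => 1 + nsize t
decreasing_by
  all_goals simp_wf
  have := List.sizeOf_lt_of_mem x.2
  omega

@[simp] lemma nsize_name (c : ℕ) : nsize (.name c) = 1 := by rw [nsize]
@[simp] lemma nsize_fn (f : ℕ) (ts : List NTerm) :
    nsize (.fn f ts) = 1 + (ts.map nsize).sum := by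
  rw [nsize]; simp [List.map_subtype, List.unattach_attach]
@[simp] lemma nsize_abs (c : ℕ) (t : NTerm) : nsize (.abs c t) = 1 + nsize t := by rw [nsize]

theorem nsize_swap (a b : ℕ) (t : NTerm) : nsize (t.swap a b) = nsize t := by
  match t with
  | .name e => simp
  | .abs e s => simp [nsize_swap a b s]
  | .fn f ts =>
    simp only [swap_fn, nsize_fn, List.map_map, Nat.add_right_cancel_iff]
    have h : ∀ s (hs : s ∈ ts), (nsize ∘ NTerm.swap a b) s = nsize s :=
      fun s hs => nsize_swap a b s
    rw [List.map_congr_left h]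
decreasing_by
  all_goals simp_wf
  have := List.sizeOf_lt_of_mem hs
  omega

lemma nsize_mem_lt {s : NTerm} {ts : List NTerm} (h : s ∈ ts) (f : ℕ) :
    nsize s < nsize (.fn f ts) := by
  simp only [nsize_fn]
  have : nsize s ≤ (ts.map nsize).sum :=
    List.single_le_sum (by simp) _ (List.mem_map_of_mem h)
  omega

/-- equivariance of freshness -/
theorem fresh_swap {a : ℕ} {t : NTerm} (h : Fresh a t) (c d : ℕ) :
    Fresh (swapName c d a) (t.swap c d) := by
  induction h with
  | name hne => rw [swap_name]; exact Fresh.name (swapName_ne c d hne)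
  | fn _ ih =>
    rw [swap_fn]
    refine Fresh.fn ?_
    intro s hs
    rcases List.mem_map.1 hs with ⟨s', hs', rfl⟩
    exact ih s' hs'
  | absSame => rw [swap_abs]; exact Fresh.absSame
  | absDiff hne _ ih => rw [swap_abs]; exact Fresh.absDiff (swapName_ne c d hne) ih

theorem fresh_swap_rev {a c d : ℕ} {t : NTerm}
    (h : Fresh (swapName c d a) (t.swap c d)) : Fresh a t := by
  have := fresh_swap h c d
  rwa [swapName_invol, swap_invol] at this

/-- reflexivity of α-equivalence -/
theorem aeq_refl (t : NTerm) : Aeq t t := by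
  match t with
  | .name c => exact Aeq.name c
  | .abs c s => exact Aeq.absSame (aeq_refl s)
  | .fn f ts =>
    refine Aeq.fn (List.forall₂_same.2 ?_)
    intro s hs
    exact aeq_refl s
decreasing_by
  all_goals simp_wf
  have := List.sizeOf_lt_of_mem hs
  omega

lemma forall₂_mem_right {R : NTerm → NTerm → Prop} {ts us : List NTerm}
    (h : List.Forall₂ R ts us) {s : NTerm} (hs : s ∈ us) : ∃ s' ∈ ts, R s' s := by
  induction h with
  | nil => simp at hs
  | cons h1 _ ih =>
    rcases List.mem_cons.1 hs with rfl | hs'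
    · exact ⟨_, List.mem_cons_self, h1⟩
    · rcases ih hs' with ⟨s', hs', h⟩
      exact ⟨s', List.mem_cons_of_mem _ hs', h⟩

lemma forall₂_imp_mem {R S : NTerm → NTerm → Prop} {ts us : List NTerm}
    (h : List.Forall₂ R ts us) (himp : ∀ x ∈ ts, ∀ y, R x y → S x y) :
    List.Forall₂ S ts us := by
  induction h with
  | nil => exact List.Forall₂.nil
  | cons h1 _ ih =>
    exact List.Forall₂.cons (himp _ (List.mem_cons_self) _ h1)
      (ih (fun x hx => himp x (List.mem_cons_of_mem _ hx)))

/-- freshness is preserved by α-equivalence -/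
theorem aeq_fresh : ∀ n, ∀ {t u : NTerm} {a : ℕ},
    nsize t ≤ n → Aeq t u → Fresh a t → Fresh a u := by
  intro n
  induction n using Nat.strong_induction_on with
  | _ n ih =>
  intro t u a hn h hf
  match h with
  | .name _ => exact hf
  | @Aeq.fn f ts us hfor =>
    cases hf with
    | fn hts =>
      refine Fresh.fn ?_
      intro s hs
      rcases forall₂_mem_right hfor hs with ⟨s', hs', h1⟩
      have hlt : nsize s' < n := lt_of_lt_of_le (nsize_mem_lt hs' f) hn
      exact ih (nsize s') hlt le_rfl h1 (hts s' hs')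
  | @Aeq.absSame b t' u' h' =>
    have hlt : nsize t' < n := by simp at hn; omega
    cases hf with
    | absSame => exact Fresh.absSame
    | absDiff hne hf' => exact Fresh.absDiff hne (ih (nsize t') hlt le_rfl h' hf')
  | @Aeq.absDiff b c t' u' hbc hcu h' =>
    have hlt : nsize t' < n := by simp at hn; omega
    by_cases hab : a = b
    · subst hab
      exact Fresh.absDiff hbc hcu
    · cases hf with
      | absSame => exact absurd rfl hab
      | absDiff _ hf' =>
        have hfw : Fresh a (u'.swap b c) := ih (nsize t') hlt le_rfl h' hf'
        by_cases hac : a = c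
        · subst hac; exact Fresh.absSame
        · have h2 : Fresh (swapName b c a) (u'.swap b c) := by
            rwa [swapName_fix hab hac]
          exact Fresh.absDiff hac (fresh_swap_rev h2)

/-- equivariance of α-equivalence -/
theorem aeq_swap : ∀ n, ∀ {t u : NTerm}, nsize t ≤ n → Aeq t u →
    ∀ c d : ℕ, Aeq (t.swap c d) (u.swap c d) := by
  intro n
  induction n using Nat.strong_induction_on with
  | _ n ih =>
  intro t u hn h c d
  match h with
  | .name a => simpa using Aeq.name (swapName c d a)
  | @Aeq.fn f ts us hfor =>
    simp only [swap_fn]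
    refine Aeq.fn ?_
    rw [List.forall₂_map_left_iff, List.forall₂_map_right_iff]
    refine forall₂_imp_mem hfor ?_
    intro x hx y hxy
    have hlt : nsize x < n := lt_of_lt_of_le (nsize_mem_lt hx f) hn
    exact ih (nsize x) hlt le_rfl hxy c d
  | @Aeq.absSame b t' u' h' =>
    have hlt : nsize t' < n := by simp at hn; omega
    simpa using Aeq.absSame (ih (nsize t') hlt le_rfl h' c d)
  | @Aeq.absDiff a b t' u' hab hfu h' =>
    have hlt : nsize t' < n := by simp at hn; omega
    simp only [swap_abs]
    refine Aeq.absDiff (swapName_ne c d hab) (fresh_swap hfu c d) ?_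
    rw [← swap_swap_eq]
    exact ih (nsize t') hlt le_rfl h' c d

/-- key lemma: if a # t and b # t then (a b)·t ≈ t -/
theorem fresh_fresh_swap : ∀ n, ∀ t : NTerm, nsize t ≤ n → ∀ a b : ℕ,
    Fresh a t → Fresh b t → Aeq (t.swap a b) t := by
  intro n
  induction n using Nat.strong_induction_on with
  | _ n ih =>
  intro t hn a b hfa hfb
  by_cases hab : a = b
  · subst hab; rw [swap_self]; exact aeq_refl t
  match t with
  | .name c =>
    cases hfa with | name hac =>
    cases hfb with | name hbc =>
    rw [swap_name, swapName_fix (Ne.symm hac) (Ne.symm hbc)]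
    exact aeq_refl _
  | .fn f ts =>
    cases hfa with | fn hta =>
    cases hfb with | fn htb =>
    rw [swap_fn]
    refine Aeq.fn ?_
    rw [List.forall₂_map_left_iff]
    refine List.forall₂_same.2 ?_
    intro s hs
    have hlt : nsize s < n := lt_of_lt_of_le (nsize_mem_lt hs f) hn
    exact ih (nsize s) hlt s le_rfl a b (hta s hs) (htb s hs)
  | .abs c s =>
    have hlt : nsize s < n := by simp at hn; omega
    rw [swap_abs]
    by_cases hac : a = c
    · subst hac
      have hbc : b ≠ a := Ne.symm hab
      cases hfb with
      | absSame => exact absurd rfl hbc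
      | absDiff _ hfb' =>
        rw [show swapName a b a = b from by simp [swapName]]
        refine Aeq.absDiff hbc hfb' ?_
        rw [swap_comm b a s]
        exact aeq_refl _
    · by_cases hbc : b = c
      · subst hbc
        cases hfa with
        | absSame => exact absurd rfl hac
        | absDiff _ hfa' =>
          rw [show swapName a b b = a from by simp only [swapName]; split_ifs <;> omega]
          exact Aeq.absDiff hac hfa' (aeq_refl _)
      · cases hfa with
        | absSame => exact absurd rfl hac
        | absDiff _ hfa' =>
        cases hfb with
        | absSame => exact absurd rfl hbc
        | absDiff _ hfb' =>
          rw [swapName_fix (Ne.symm hac) (Ne.symm hbc)]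
          exact Aeq.absSame (ih (nsize s) hlt s le_rfl a b hfa' hfb')

lemma forall₂_trans {ts us vs : List NTerm}
    (htr : ∀ x ∈ ts, ∀ u v, Aeq x u → Aeq u v → Aeq x v)
    (h1 : List.Forall₂ Aeq ts us) (h2 : List.Forall₂ Aeq us vs) :
    List.Forall₂ Aeq ts vs := by
  induction h1 generalizing vs with
  | nil => cases h2; exact .nil
  | cons hxy h ih =>
    cases h2 with
    | cons hyz hrest =>
      exact .cons (htr _ (List.mem_cons_self) _ _ hxy hyz)
        (ih (fun x hx => htr x (List.mem_cons_of_mem _ hx)) hrest)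

theorem aeq_trans_aux : ∀ n, ∀ {t u v : NTerm}, nsize t ≤ n →
    Aeq t u → Aeq u v → Aeq t v := by
  intro n
  induction n using Nat.strong_induction_on with
  | _ n ih =>
  intro t u v hn h1 h2
  match h1 with
  | .name a => exact h2
  | @Aeq.fn f ts us hfor1 =>
    cases h2 with
    | fn hfor2 =>
      refine Aeq.fn (forall₂_trans ?_ hfor1 hfor2)
      intro x hx u' v' hxu hvv
      have hlt : nsize x < n := lt_of_lt_of_le (nsize_mem_lt hx f) hn
      exact ih (nsize x) hlt le_rfl hxu hvv
  | @Aeq.absSame a t' u' h1' =>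
    have hlt : nsize t' < n := by simp at hn; omega
    cases h2 with
    | absSame h2' => exact Aeq.absSame (ih (nsize t') hlt le_rfl h1' h2')
    | absDiff hne hfv h2' =>
      exact Aeq.absDiff hne hfv (ih (nsize t') hlt le_rfl h1' h2')
  | @Aeq.absDiff a b t' u' hab hfu h1' =>
    have hlt : nsize t' < n := by simp at hn; omega
    cases h2 with
    | absSame h2' =>
      refine Aeq.absDiff hab (aeq_fresh (nsize u') le_rfl h2' hfu) ?_
      have step2 := aeq_swap (nsize u') le_rfl h2' a b
      exact ih (nsize t') hlt le_rfl h1' step2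
    | @absDiff _ c _ v' hbc hfv h2' =>
      by_cases hac : a = c
      · subst hac
        refine Aeq.absSame ?_
        have step2 : Aeq (u'.swap a b) ((v'.swap b a).swap a b) :=
          aeq_swap (nsize u') le_rfl h2' a b
        rw [swap_comm b a, swap_invol] at step2
        exact ih (nsize t') hlt le_rfl h1' step2
      · have hfav : Fresh a v' := by
          have h3 : Fresh a (v'.swap b c) := aeq_fresh (nsize u') le_rfl h2' hfu
          have h4 : Fresh (swapName b c a) (v'.swap b c) := by
            rwa [swapName_fix hab hac]
          exact fresh_swap_rev h4
        refine Aeq.absDiff hac hfav ?_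
        have step2 : Aeq (u'.swap a b) ((v'.swap b c).swap a b) :=
          aeq_swap (nsize u') le_rfl h2' a b
        have heq : (v'.swap b c).swap a b = (v'.swap a b).swap a c := by
          rw [swap_swap_eq b c a b v',
            show swapName a b b = a from by simp only [swapName]; split_ifs <;> omega,
            show swapName a b c = c from
              swapName_fix (fun h => hac h.symm) (fun h => hbc h.symm)]
        rw [heq] at step2
        have t1 : Aeq t' ((v'.swap a b).swap a c) :=
          ih (nsize t') hlt le_rfl h1' step2
        have hvb : Aeq (v'.swap a b) v' :=
          fresh_fresh_swap (nsize v') v' le_rfl a b hfav hfv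
        have t2 : Aeq ((v'.swap a b).swap a c) (v'.swap a c) := by
          have := aeq_swap (nsize (v'.swap a b)) le_rfl hvb a c
          exact this
        have hlt2 : nsize t' ≤ nsize t' := le_rfl
        exact ih (nsize t') hlt le_rfl t1 t2

/-- ground α-equivalence is transitive. -/
theorem aeq_trans (t u v : NTerm) (h1 : Aeq t u) (h2 : Aeq u v) : Aeq t v :=
  aeq_trans_aux (nsize t) le_rfl h1 h2
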